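/- (Lemma 4.13 i), optimality of the bound for p = 2.) Let p = 2, s ≥ 2, and f(X) := (X + X^{2^{s−1}})^7 ∈ k[X]. Then S(f) = {y ∈ k : y^{2^{s−1}} = y} (the finite field 𝔽_{2^{s−1}} inside k), so |S(f)| = 2^{s−1}; its reduced representative has conductor m = 1 + 3·2^s, and the bound |G_{∞,1}| ≤ 2^s of Lemma 4.13 is attained. -/

import Mathlib

open Polynomial

/-- `S(f)`: the set of `y ∈ k` such that `f(X+y) - f(X) - f(y) = P(X) - P(X)^p`
for some polynomial `P` with `P(0) = 0`. -/
def Sf (p : ℕ) {k : Type*} [Field k] (f : k[X]) : Set k :=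
  {y | ∃ P : k[X], P.coeff 0 = 0 ∧
    f.comp (X + C y) - f - C (f.eval y) = P - P ^ p}

section CharTwoAux

variable {R : Type*} [CommRing R]

private lemma pow2' (h2 : (2:R) = 0) (A B : R) : (A+B)^2 = A^2 + B^2 := by
  linear_combination (A*B) * h2

private lemma pow3' (h2 : (2:R) = 0) (A B : R) :
    (A+B)^3 = A^3 + A^2*B + A*B^2 + B^3 := by
  linear_combination (A^2*B + A*B^2) * h2

private lemma pow4' (h2 : (2:R) = 0) (A B : R) : (A+B)^4 = A^4 + B^4 := by
  linear_combination (2*A^3*B + 3*A^2*B^2 + 2*A*B^3) * h2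

private lemma pow5' (h2 : (2:R) = 0) (A B : R) :
    (A+B)^5 = A^5 + A^4*B + A*B^4 + B^5 := by
  linear_combination (2*A^4*B + 5*A^3*B^2 + 5*A^2*B^3 + 2*A*B^4) * h2

private lemma pow6' (h2 : (2:R) = 0) (A B : R) :
    (A+B)^6 = A^6 + A^4*B^2 + A^2*B^4 + B^6 := by
  linear_combination (3*A^5*B + 7*A^4*B^2 + 10*A^3*B^3 + 7*A^2*B^4 + 3*A*B^5) * h2

private lemma pow7' (h2 : (2:R) = 0) (u a : R) :
    (u+a)^7 - u^7 - a^7 = a*u^6 + a^2*u^5 + a^3*u^4 + a^4*u^3 + a^5*u^2 + a^6*u := by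
  linear_combination (3*u^6*a + 10*u^5*a^2 + 17*u^4*a^3 + 17*u^3*a^4 + 10*u^2*a^5 + 3*u*a^6) * h2

private lemma pow7'' (h2 : (2:R) = 0) (A B : R) :
    (A+B)^7 = A^7 + A^6*B + A^5*B^2 + A^4*B^3 + A^3*B^4 + A^2*B^5 + A*B^6 + B^7 := by
  linear_combination (3*A^6*B + 10*A^5*B^2 + 17*A^4*B^3 + 17*A^3*B^4 + 10*A^2*B^5 + 3*A*B^6) * h2

end CharTwoAux

section CharTwoField

variable {k : Type*} [Field k] [CharP k 2]

private lemma htwo : (2:k[X]) = 0 := by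
  have := CharP.cast_eq_zero k[X] 2
  simpa using this

/-- coefficients of a square in characteristic two -/
private lemma coeff_sq' (P : k[X]) (n : ℕ) :
    (P ^ 2).coeff n = if 2 ∣ n then (P.coeff (n / 2)) ^ 2 else 0 := by
  have h := Polynomial.map_frobenius_expand 2 P
  rw [← h, coeff_map, Polynomial.coeff_expand (by norm_num)]
  split_ifs with hd
  · rw [frobenius_def]
  · rw [map_zero]

/-- telescoping invariant: if `Δ = P - P²` then the twisted sum of coefficients along
the chain `m, 2m, 4m, …` equals a high coefficient of `P`. -/
private lemma keyA (P : k[X]) (m : ℕ) (hm : ¬ 2 ∣ m) (N : ℕ) :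
    ∑ t ∈ Finset.range (N+1), ((P - P^2).coeff (2^t * m))^(2^(N-t)) = P.coeff (2^N * m) := by
  induction N with
  | zero => simp [coeff_sub, coeff_sq', hm]
  | succ N ih =>
    rw [Finset.sum_range_succ]
    have hstep : ∀ t ∈ Finset.range (N+1),
        ((P - P^2).coeff (2^t * m))^(2^(N+1-t))
        = (((P - P^2).coeff (2^t*m))^(2^(N-t)))^2 := by
      intro t ht
      rw [← pow_mul]
      congr 1
      have h1 : t ≤ N := Nat.lt_succ_iff.mp (Finset.mem_range.mp ht)
      rw [← pow_succ]
      congr 1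
      omega
    rw [Finset.sum_congr rfl hstep]
    have hsquare : ∑ t ∈ Finset.range (N+1), (((P - P^2).coeff (2^t*m))^(2^(N-t)))^2
        = (∑ t ∈ Finset.range (N+1), ((P - P^2).coeff (2^t*m))^(2^(N-t)))^2 := by
      have h := map_sum (frobenius k 2)
        (fun t => ((P - P^2).coeff (2^t*m))^(2^(N-t))) (Finset.range (N+1))
      simp only [frobenius_def] at h
      exact h.symm
    rw [hsquare, ih]
    have he : 2^(N+1) * m = 2*(2^N * m) := by ring
    rw [he, coeff_sub, coeff_sq', if_pos ⟨2^N*m, rfl⟩, Nat.mul_div_cancel_left _ two_pos]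
    have : 2^(N+1-(N+1)) = 1 := by norm_num
    rw [this]
    ring

/-- If `Δ = P - P²` and `m` is odd with `deg Δ < 2m`, then the coefficient of `Δ`
at `m` vanishes. -/
private lemma keyB (D P : k[X]) (m : ℕ) (hm : ¬ 2 ∣ m)
    (hd : D.natDegree < 2 * m) (h : D = P - P ^ 2) : D.coeff m = 0 := by
  set N := P.natDegree + 1 with hN
  have hA := keyA P m hm N
  rw [← h] at hA
  have hm1 : 1 ≤ m := Nat.pos_of_ne_zero (fun h0 => hm (h0 ▸ dvd_zero 2))
  have hRHS : P.coeff (2^N * m) = 0 := by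
    apply coeff_eq_zero_of_natDegree_lt
    calc P.natDegree < 2^N := by
          have : P.natDegree < 2 ^ P.natDegree := @Nat.lt_two_pow_self P.natDegree
          have h2 : (2:ℕ)^P.natDegree ≤ 2^N := Nat.pow_le_pow_right (by norm_num) (by omega)
          omega
      _ ≤ 2^N * m := Nat.le_mul_of_pos_right _ hm1
  rw [hRHS] at hA
  rw [Finset.sum_eq_single_of_mem 0 (by simp) ?side] at hA
  · simp only [pow_zero, one_mul, Nat.sub_zero] at hA
    exact pow_eq_zero_iff (by positivity) |>.mp hA
  · intro t ht ht0
    have h2t : 2*m ≤ 2^t * m := by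
      have : (2:ℕ) ≤ 2^t := by
        calc (2:ℕ) = 2^1 := rfl
          _ ≤ 2^t := Nat.pow_le_pow_right (by norm_num) (by omega)
      exact Nat.mul_le_mul_right m this
    rw [coeff_eq_zero_of_natDegree_lt (by omega)]
    exact zero_pow (by positivity)

set_option maxHeartbeats 1000000 in
/-- The explicit expansion of `f(X+y) - f(X) - f(y)` for `f = (X + X^{2^n})^7`. -/
private lemma E_lemma (n : ℕ) (y : k) :
    ((X + X^(2^n) : k[X])^7).comp (X + C y) - (X + X^(2^n))^7
      - C (((X + X^(2^n) : k[X])^7).eval y)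
    = C (y^(2^n) + y) * (X^6 + X^((2^n)*4+2) + X^((2^n)*2+4) + X^((2^n)*6))
    + C ((y^(2^n) + y)^2) * (X^5 + X^((2^n)*4+1) + X^((2^n)+4) + X^((2^n)*5))
    + C ((y^(2^n) + y)^3) * (X^4 + X^((2^n)*4))
    + C ((y^(2^n) + y)^4) * (X^3 + X^((2^n)*2+1) + X^((2^n)+2) + X^((2^n)*3))
    + C ((y^(2^n) + y)^5) * (X^2 + X^((2^n)*2))
    + C ((y^(2^n) + y)^6) * (X^1 + X^(2^n)) := by
  have h2 : (2:k[X]) = 0 := htwo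
  have hfr : (X + C y : k[X])^(2^n) = X^(2^n) + C (y^(2^n)) := by
    rw [add_pow_char_pow, ← map_pow]
  simp only [pow_comp, add_comp, X_comp, eval_pow, eval_add, eval_X]
  rw [hfr]
  simp only [map_pow, map_add]
  have e7 := pow7' h2 (X + X^(2^n) : k[X]) (C y + (C y)^(2^n))
  have e6 := pow6' h2 (X : k[X]) (X^(2^n))
  have e5 := pow5' h2 (X : k[X]) (X^(2^n))
  have e4 := pow4' h2 (X : k[X]) (X^(2^n))
  have e3 := pow3' h2 (X : k[X]) (X^(2^n))
  have e2 := pow2' h2 (X : k[X]) (X^(2^n))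
  linear_combination e7 + (C y + (C y)^(2^n))*e6 + (C y + (C y)^(2^n))^2*e5
    + (C y + (C y)^(2^n))^3*e4 + (C y + (C y)^(2^n))^4*e3 + (C y + (C y)^(2^n))^5*e2

private lemma part1 (n : ℕ) (hn : 1 ≤ n) :
    Sf 2 ((X + X^(2^n) : k[X])^7) = {y : k | y^(2^n) = y} := by
  have h2k : (2:k) = 0 := by have := CharP.cast_eq_zero k 2; simpa using this
  ext y
  simp only [Sf, Set.mem_setOf_eq]
  constructor
  · rintro ⟨P, hP0, hP⟩
    have d1 : (X + X^(2^n) : k[X]).natDegree ≤ 2^n := by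
      refine le_trans (natDegree_add_le _ _) ?_
      simp [natDegree_X_pow, natDegree_X, Nat.one_le_two_pow]
    have d2 : ((X + X^(2^n) : k[X])^7).natDegree ≤ 7*2^n :=
      le_trans (natDegree_pow_le) (by omega)
    have d3 : (((X + X^(2^n) : k[X])^7).comp (X + C y)).natDegree ≤ 7*2^n := by
      refine le_trans (natDegree_comp_le) ?_
      rw [natDegree_X_add_C]
      omega
    have hdeg : (((X + X^(2^n) : k[X])^7).comp (X + C y) - (X + X^(2^n))^7
        - C (((X + X^(2^n) : k[X])^7).eval y)).natDegree ≤ 7*2^n := by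
      refine le_trans (natDegree_sub_le _ _) (max_le ?_ ?_)
      · exact le_trans (natDegree_sub_le _ _) (max_le d3 d2)
      · simp [natDegree_C]
    rw [E_lemma n y] at hP hdeg
    set q := 2^n with hqdef
    have hq2 : 2 ≤ q := by
      rw [hqdef]
      calc (2:ℕ) = 2^1 := rfl
        _ ≤ 2^n := Nat.pow_le_pow_right (by norm_num) hn
    have hzero := keyB _ P (q*4+1) (by omega) (by omega) hP
    have hne : ∀ e : ℕ, ¬ (q*4+1 = e) → ((X:k[X])^e).coeff (q*4+1) = 0 :=
      fun e h => by rw [coeff_X_pow, if_neg h]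
    have heq : ((X:k[X])^(q*4+1)).coeff (q*4+1) = 1 := by rw [coeff_X_pow, if_pos rfl]
    rw [coeff_add, coeff_add, coeff_add, coeff_add, coeff_add] at hzero
    simp only [coeff_C_mul, coeff_add, heq,
      hne 6 (by omega), hne (q*4+2) (by omega), hne (q*2+4) (by omega), hne (q*6) (by omega),
      hne 5 (by omega), hne (q+4) (by omega), hne (q*5) (by omega),
      hne 4 (by omega), hne (q*4) (by omega),
      hne 3 (by omega), hne (q*2+1) (by omega), hne (q+2) (by omega), hne (q*3) (by omega),
      hne 2 (by omega), hne (q*2) (by omega),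
      hne 1 (by omega), hne q (by omega)] at hzero
    have hc : (y^q + y)^2 = 0 := by linear_combination hzero
    have hc0 : y^q + y = 0 := pow_eq_zero_iff (two_ne_zero) |>.mp hc
    show y^q = y
    linear_combination hc0 - y*h2k
  · intro hy
    refine ⟨0, by simp, ?_⟩
    rw [E_lemma n y]
    have hc0 : y^(2^n) + y = 0 := by
      have hy' : y^(2^n) = y := hy
      linear_combination hy' + y*h2k
    rw [hc0]
    simp [zero_pow]

private lemma part2 [IsAlgClosed k] (n : ℕ) (hn : 1 ≤ n) :
    {y : k | y^(2^n) = y}.ncard = 2^n := by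
  classical
  have hq2 : 2 ≤ 2^n := by
    calc (2:ℕ) = 2^1 := rfl
      _ ≤ 2^n := Nat.pow_le_pow_right (by norm_num) hn
  set p : k[X] := X^(2^n) - X with hp
  have hco : p.coeff (2^n) = 1 := by
    rw [hp, coeff_sub, coeff_X_pow, if_pos rfl, coeff_X, if_neg (by omega), sub_zero]
  have hpne : p ≠ 0 := fun h => by simp [h] at hco
  have hdeg : p.natDegree = 2^n := by
    apply le_antisymm
    · refine le_trans (natDegree_sub_le _ _) ?_
      simp [natDegree_X_pow, natDegree_X]
      omega
    · exact le_natDegree_of_ne_zero (by rw [hco]; exact one_ne_zero)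
  have hderiv : derivative p = -1 := by
    rw [hp, derivative_sub, derivative_X_pow, derivative_X]
    have : ((2^n : ℕ) : k) = 0 := by
      have h2k : ((2:ℕ):k) = 0 := CharP.cast_eq_zero k 2
      rw [Nat.cast_pow, h2k, zero_pow (by omega)]
    rw [this]
    simp
  have hsep : p.Separable := by
    rw [Polynomial.Separable, hderiv]
    exact (isCoprime_one_right).neg_right
  have hsplit : Splits (p.map (algebraMap k k)) := IsAlgClosed.splits _
  have hseteq : {y : k | y^(2^n) = y} = p.rootSet k := by
    ext x
    rw [Set.mem_setOf_eq, Polynomial.mem_rootSet]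
    constructor
    · intro h
      refine ⟨hpne, ?_⟩
      simp [hp, h]
    · rintro ⟨-, h⟩
      simp only [hp, map_sub, aeval_X_pow, aeval_X] at h
      exact sub_eq_zero.mp h
  rw [hseteq]
  have hcard := Polynomial.card_rootSet_eq_natDegree (K := k) hsep hsplit
  rw [hdeg] at hcard
  rw [← Nat.card_coe_set_eq, Nat.card_eq_fintype_card]
  convert hcard

/-- every monomial is congruent, modulo `Q² - Q`, to a monomial of odd exponent -/
private lemma lemD (e : ℕ) : 0 < e → ∃ (m : ℕ) (Q : k[X]), ¬ 2 ∣ m ∧ m ≤ e ∧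
    (2 ∣ e → 2*m ≤ e) ∧ (¬ 2 ∣ e → m = e) ∧ (X:k[X])^m = X^e + Q^2 + Q := by
  have h2 : (2:k[X]) = 0 := htwo
  induction e using Nat.strong_induction_on with
  | _ e ih =>
    intro he
    by_cases hpar : 2 ∣ e
    · obtain ⟨e', rfl⟩ : ∃ e', e = 2*e' := hpar
      have he' : 0 < e' := by omega
      obtain ⟨m, Q, hm, hle, hhalf, hoddeq, hQ⟩ := ih e' (by omega) he'
      refine ⟨m, X^e' + Q, hm, by omega, fun _ => by omega,
        fun h => absurd ⟨e', rfl⟩ h, ?_⟩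
      linear_combination hQ - (X^(2*e') + X^e'*Q)*h2
    · exact ⟨e, 0, hpar, le_rfl, fun h => absurd h hpar, fun _ => rfl, by ring⟩

private lemma part3 (n : ℕ) (hn : 1 ≤ n) :
    ∃ g Q : k[X], g = (X + X^(2^n))^7 + Q ^ 2 - Q ∧
      (∀ i : ℕ, 2 ∣ i → i ≠ 0 → g.coeff i = 0) ∧
      g.natDegree = (2^n)*6 + 1 := by
  have h2 : (2:k[X]) = 0 := htwo
  have hq2 : 2 ≤ 2^n := by
    calc (2:ℕ) = 2^1 := rfl
      _ ≤ 2^n := Nat.pow_le_pow_right (by norm_num) hn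
  have hqe : 2 ∣ 2^n := dvd_pow_self 2 (by omega)
  have hfe : (X + X^(2^n) : k[X])^7 = X^7 + X^((2^n)+6) + X^((2^n)*2+5) + X^((2^n)*3+4)
      + X^((2^n)*4+3) + X^((2^n)*5+2) + X^((2^n)*6+1) + X^((2^n)*7) := by
    linear_combination pow7'' h2 (X:k[X]) (X^(2^n))
  set q := 2^n with hqdef
  obtain ⟨m1, Q1, hm1, hle1, hhalf1, hoddeq1, hQ1⟩ := lemD (k := k) 7 (by omega)
  obtain ⟨m2, Q2, hm2, hle2, hhalf2, hoddeq2, hQ2⟩ := lemD (k := k) (q+6) (by omega)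
  obtain ⟨m3, Q3, hm3, hle3, hhalf3, hoddeq3, hQ3⟩ := lemD (k := k) (q*2+5) (by omega)
  obtain ⟨m4, Q4, hm4, hle4, hhalf4, hoddeq4, hQ4⟩ := lemD (k := k) (q*3+4) (by omega)
  obtain ⟨m5, Q5, hm5, hle5, hhalf5, hoddeq5, hQ5⟩ := lemD (k := k) (q*4+3) (by omega)
  obtain ⟨m6, Q6, hm6, hle6, hhalf6, hoddeq6, hQ6⟩ := lemD (k := k) (q*5+2) (by omega)
  obtain ⟨m7, Q7, hm7, hle7, hhalf7, hoddeq7, hQ7⟩ := lemD (k := k) (q*6+1) (by omega)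
  obtain ⟨m8, Q8, hm8, hle8, hhalf8, hoddeq8, hQ8⟩ := lemD (k := k) (q*7) (by omega)
  have hb1 : m1 = 7 := hoddeq1 (by omega)
  have hb2 : 2*m2 ≤ q+6 := hhalf2 (by omega)
  have hb3 : m3 = q*2+5 := hoddeq3 (by omega)
  have hb4 : 2*m4 ≤ q*3+4 := hhalf4 (by omega)
  have hb5 : m5 = q*4+3 := hoddeq5 (by omega)
  have hb6 : 2*m6 ≤ q*5+2 := hhalf6 (by omega)
  have hb7 : m7 = q*6+1 := hoddeq7 (by omega)
  have hb8 : 2*m8 ≤ q*7 := hhalf8 (by omega)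
  subst hb7
  refine ⟨X^m1 + X^m2 + X^m3 + X^m4 + X^m5 + X^m6 + X^(q*6+1) + X^m8,
    Q1+Q2+Q3+Q4+Q5+Q6+Q7+Q8, ?_, ?_, ?_⟩
  · rw [hfe]
    have hQsq : (Q1+Q2+Q3+Q4+Q5+Q6+Q7+Q8 : k[X])^2
        = Q1^2+Q2^2+Q3^2+Q4^2+Q5^2+Q6^2+Q7^2+Q8^2 := by
      simp only [pow2' h2]
    linear_combination (hQ1+hQ2+hQ3+hQ4+hQ5+hQ6+hQ7+hQ8) - hQsq
      + (Q1+Q2+Q3+Q4+Q5+Q6+Q7+Q8)*h2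
  · intro i hdvd hi0
    simp only [coeff_add, coeff_X_pow]
    rw [if_neg (by omega), if_neg (by omega), if_neg (by omega), if_neg (by omega),
      if_neg (by omega), if_neg (by omega), if_neg (by omega), if_neg (by omega)]
    norm_num
  · have hstep : ∀ (p : k[X]) (N m : ℕ), p.natDegree ≤ N → m ≤ N →
        (p + X^m).natDegree ≤ N := fun p N m h1 hm =>
      le_trans (natDegree_add_le _ _) (max_le h1 (le_trans (natDegree_X_pow m).le hm))
    apply le_antisymm
    · refine hstep _ _ _ (hstep _ _ _ (hstep _ _ _ (hstep _ _ _ (hstep _ _ _ (hstep _ _ _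
        (hstep _ _ _ ?_ (by omega)) (by omega)) (by omega)) (by omega)) (by omega))
        (by omega)) (by omega)
      rw [natDegree_X_pow]
      omega
    · apply le_natDegree_of_ne_zero
      simp only [coeff_add, coeff_X_pow]
      rw [if_neg (by omega), if_neg (by omega), if_neg (by omega), if_neg (by omega),
        if_neg (by omega), if_neg (by omega)]
      rw [if_neg (show ¬(q*6+1 = m8) by omega)]
      simp

end CharTwoField

/-- Lemma 4.13 i), optimality for `p = 2`: for `f = (X + X^{2^{s-1}})^7` one has
`S(f) = 𝔽_{2^{s-1}} = {y : y^{2^{s-1}} = y}`, so `|S(f)| = 2^{s-1}`; the reduced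
representative of `f` (a 2-power-free polynomial congruent to `f` mod `(F - Id)k[X]`)
has conductor `1 + 3·2^s`, so the bound `|G_{∞,1}| ≤ 2^s` of Lemma 4.13 is attained. -/
theorem Sf_optimal_char_two (k : Type*) [Field k] [IsAlgClosed k] [CharP k 2]
    (s : ℕ) (hs : 2 ≤ s) (f : k[X])
    (hf : f = (X + X ^ 2 ^ (s - 1)) ^ 7) :
    Sf 2 f = {y : k | y ^ 2 ^ (s - 1) = y} ∧ (Sf 2 f).ncard = 2 ^ (s - 1) ∧
    ∃ g Q : k[X], g = f + Q ^ 2 - Q ∧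
      (∀ i : ℕ, 2 ∣ i → i ≠ 0 → g.coeff i = 0) ∧
      g.natDegree = 1 + 3 * 2 ^ s := by
  have hn : 1 ≤ s - 1 := by omega
  subst hf
  refine ⟨part1 (s-1) hn, ?_, ?_⟩
  · rw [part1 (s-1) hn]
    exact part2 (k := k) (s-1) hn
  · obtain ⟨g, Q, hg, hc, hd⟩ := part3 (k := k) (s-1) hn
    refine ⟨g, Q, hg, hc, ?_⟩
    rw [hd]
    have h2s : 2^s = 2*2^(s-1) := by
      rw [← pow_succ']
      congr 1
      omega
    omega
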